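/- Let G be an (L+1)×(L+1) real symmetric matrix with non-negative entries and positive top eigenvalue μ with a strictly positive top eigenvector v_0, and suppose G maps monotone non-increasing non-negative vectors to monotone non-increasing non-negative vectors. Then v_0 is monotone non-increasing. -/

import Mathlib

open Finset Filter Topology


/-- If a real symmetric matrix `G` with non-negative entries has positive top eigenvalue
`μ` (all other eigenvalues strictly smaller in absolute value, eigenspace of `μ`
one-dimensional) with strictly positive top eigenvector `v₀`, and `G` maps monotone
non-increasing non-negative vectors to monotone non-increasing non-negative vectors,
then `v₀` is monotone non-increasing. -/
theorem top_eigenvector_monotone (L : ℕ)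
    (G : Matrix (Fin (L + 1)) (Fin (L + 1)) ℝ)
    (hHerm : G.IsHermitian) (hnn : ∀ i j, 0 ≤ G i j)
    (μ : ℝ) (hμ : 0 < μ)
    (v₀ : Fin (L + 1) → ℝ) (hv₀ : ∀ i, 0 < v₀ i)
    (heig : G.mulVec v₀ = μ • v₀)
    (htop : ∀ (δ : ℝ) (w : Fin (L + 1) → ℝ), w ≠ 0 → G.mulVec w = δ • w →
      δ = μ ∨ |δ| < μ)
    (huniq : ∀ w : Fin (L + 1) → ℝ, G.mulVec w = μ • w → ∃ c : ℝ, w = c • v₀)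
    (hmono : ∀ x : Fin (L + 1) → ℝ, (∀ i, 0 ≤ x i) → (∀ i j, i ≤ j → x j ≤ x i) →
      (∀ i, 0 ≤ G.mulVec x i) ∧ (∀ i j, i ≤ j → G.mulVec x j ≤ G.mulVec x i)) :
    ∀ i j : Fin (L + 1), i ≤ j → v₀ j ≤ v₀ i := by
  classical
  intro i j hij
  set B := hHerm.eigenvectorBasis with hB
  set lam := hHerm.eigenvalues with hlam
  set u : Fin (L+1) → Fin (L+1) → ℝ := fun k => (⇑(B k) : Fin (L+1) → ℝ) with hu
  have hBne : ∀ k, u k ≠ 0 := by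
    intro k hk
    exact B.orthonormal.ne_zero k (by ext m; exact congrFun hk m)
  have hek : ∀ k, G.mulVec (u k) = lam k • u k := fun k =>
    hHerm.mulVec_eigenvectorBasis k
  set S : ℝ := ∑ m, v₀ m with hSdef
  have hS : 0 < S := Finset.sum_pos (fun m _ => hv₀ m) ⟨⟨0, Nat.succ_pos L⟩, Finset.mem_univ _⟩
  set x : EuclideanSpace ℝ (Fin (L+1)) := WithLp.toLp 2 (fun _ => (1:ℝ)) with hx
  set c : Fin (L+1) → ℝ := fun k => B.repr x k with hc
  have hxapp : ∀ m, (1:ℝ) = ∑ k, c k * u k m := by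
    intro m
    have h2 := congrArg (EuclideanSpace.proj (𝕜 := ℝ) m) (B.sum_repr x).symm
    rw [map_sum] at h2
    simpa [hx] using h2
  have hcval : ∀ k, c k = ∑ m, u k m := by
    intro k
    rw [hc]
    simp only [B.repr_apply_apply]
    rw [PiLp.inner_apply]
    simp only [hx, RCLike.inner_apply, conj_trivial, mul_one]
    simp only [one_mul]
    rfl
  -- iterated action on basis vectors
  have hGn : ∀ (n : ℕ) (k), (G ^ n).mulVec (u k) = (lam k) ^ n • u k := by
    intro n k
    induction n with
    | zero => simp [Matrix.mulVec_one]
    | succ n ih =>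
      rw [pow_succ', ← Matrix.mulVec_mulVec, ih, Matrix.mulVec_smul, hek k,
        smul_smul, pow_succ]
  -- ones vector as a combination
  set ones : Fin (L+1) → ℝ := fun _ => (1:ℝ) with hones'
  have hones : ones = ∑ k, c k • u k := by
    funext m
    rw [hones']
    simp only [Finset.sum_apply, Pi.smul_apply, smul_eq_mul]
    exact hxapp m
  have hkey : ∀ n : ℕ, (G ^ n).mulVec ones = ∑ k, (c k * lam k ^ n) • u k := by
    intro n
    rw [hones, ← Matrix.mulVecLin_apply, map_sum]
    refine Finset.sum_congr rfl fun k _ => ?_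
    rw [map_smul, Matrix.mulVecLin_apply, hGn n k, smul_smul]
  -- monotonicity of iterates
  have hmonon : ∀ n : ℕ, (∀ m, 0 ≤ (G ^ n).mulVec ones m) ∧
      (∀ a b : Fin (L+1), a ≤ b → (G ^ n).mulVec ones b ≤ (G ^ n).mulVec ones a) := by
    intro n
    induction n with
    | zero =>
      simp only [pow_zero, Matrix.one_mulVec]
      exact ⟨fun m => zero_le_one, fun a b _ => le_refl 1⟩
    | succ n ih =>
      have h1 : (G ^ (n+1)).mulVec ones = G.mulVec ((G ^ n).mulVec ones) := by
        rw [pow_succ', ← Matrix.mulVec_mulVec]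
      rw [h1]
      exact hmono _ ih.1 ih.2
  -- the normalized sequence
  set f : ℕ → ℝ := fun n => ∑ k, c k * (lam k / μ) ^ n * (u k i - u k j) with hf
  have hfnn : ∀ n, 0 ≤ f n := by
    intro n
    have hμn : (0:ℝ) < μ ^ n := pow_pos hμ n
    have hval : μ ^ n * f n = (G ^ n).mulVec ones i - (G ^ n).mulVec ones j := by
      rw [hf, hkey n]
      simp only [Finset.sum_apply, Pi.smul_apply, smul_eq_mul]
      rw [Finset.mul_sum, ← Finset.sum_sub_distrib]
      refine Finset.sum_congr rfl fun k _ => ?_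
      rw [div_pow]
      field_simp
    have hd : 0 ≤ (G ^ n).mulVec ones i - (G ^ n).mulVec ones j :=
      sub_nonneg.2 ((hmonon n).2 i j hij)
    nlinarith [hval, hd, hμn]
  -- eigenvalue dichotomy
  have hdich : ∀ k, lam k = μ ∨ |lam k| < μ := fun k => htop (lam k) _ (hBne k) (hek k)
  -- if lam k = μ then u k is proportional to v₀ with coefficient c k / S
  have hprop : ∀ k, lam k = μ → u k = (c k / S) • v₀ := by
    intro k hk
    obtain ⟨e, he⟩ := huniq (u k) (by rw [hek k, hk])
    have hce : c k = e * S := by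
      rw [hcval k, he, hSdef, Finset.mul_sum]
      exact Finset.sum_congr rfl fun m _ => rfl
    rw [he, hce, mul_div_assoc, div_self (ne_of_gt hS), mul_one]
  -- limits
  set t : Fin (L+1) → ℝ := fun k => if lam k = μ then (c k)^2 / S * (v₀ i - v₀ j) else 0 with ht
  have htend : Tendsto f atTop (𝓝 (∑ k, t k)) := by
    rw [hf]
    apply tendsto_finset_sum
    intro k _
    by_cases hk : lam k = μ
    · have h1 : (fun n : ℕ => c k * (lam k / μ) ^ n * (u k i - u k j)) = fun _ => t k := by
        funext n
        rw [hk, div_self (ne_of_gt hμ), one_pow, mul_one, ht]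
        simp only [hk, if_true]
        have hi := congrFun (hprop k hk) i
        have hj := congrFun (hprop k hk) j
        simp only [Pi.smul_apply, smul_eq_mul] at hi hj
        rw [hi, hj]
        field_simp
      rw [h1]
      exact tendsto_const_nhds
    · have habs : |lam k / μ| < 1 := by
        rw [abs_div, abs_of_pos hμ, div_lt_one hμ]
        rcases hdich k with h | h
        · exact absurd h hk
        · exact h
      have h0 : Tendsto (fun n : ℕ => (lam k / μ) ^ n) atTop (𝓝 0) :=
        tendsto_pow_atTop_nhds_zero_of_abs_lt_one habs
      have ht0 : t k = 0 := by rw [ht]; simp [hk]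
      rw [ht0]
      have := (h0.const_mul (c k)).mul_const (u k i - u k j)
      simpa using this
  have hT : 0 ≤ ∑ k, t k := ge_of_tendsto' htend hfnn
  -- rewrite the limit
  set A : ℝ := ∑ k, (if lam k = μ then (c k)^2 / S else 0) with hA
  have hTA : (∑ k, t k) = A * (v₀ i - v₀ j) := by
    rw [hA, Finset.sum_mul]
    refine Finset.sum_congr rfl fun k _ => ?_
    rw [ht]
    by_cases hk : lam k = μ <;> simp [hk]
  -- there exists an eigenvalue equal to μ
  have hsym : ∀ a b, G a b = G b a := by
    intro a b
    conv_lhs => rw [← hHerm]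
    simp [Matrix.conjTranspose_apply]
  have hex : ∃ k, lam k = μ := by
    by_contra hno
    push_neg at hno
    have hd0 : ∀ k, dotProduct (u k) v₀ = 0 := by
      intro k
      have h1 : dotProduct (u k) (G.mulVec v₀) = μ * (dotProduct (u k) v₀) := by
        rw [heig, dotProduct_smul, smul_eq_mul]
      have h2 : dotProduct (u k) (G.mulVec v₀) = lam k * (dotProduct (u k) v₀) := by
        rw [Matrix.dotProduct_mulVec]
        have hvm : G.vecMul (u k) = G.mulVec (u k) := by
          funext a
          simp only [Matrix.vecMul, Matrix.mulVec, dotProduct]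
          exact Finset.sum_congr rfl fun b _ => by rw [hsym a b]; ring
        rw [hvm, hek k, smul_dotProduct, smul_eq_mul]
      have h3 := h1.symm.trans h2
      have h4 : (lam k - μ) * dotProduct (u k) v₀ = 0 := by
        rw [sub_mul]; linarith
      rcases mul_eq_zero.mp h4 with h | h
      · exact absurd (by linarith : lam k = μ) (hno k)
      · exact h
    have hrepr0 : ∀ k, B.repr (WithLp.toLp 2 v₀ : EuclideanSpace ℝ (Fin (L+1))) k = 0 := by
      intro k
      rw [B.repr_apply_apply, PiLp.inner_apply]
      have := hd0 k
      simp only [dotProduct] at this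
      rw [← this]
      refine Finset.sum_congr rfl fun m _ => ?_
      simp [hu, mul_comm]
    have hzero : (WithLp.toLp 2 v₀ : EuclideanSpace ℝ (Fin (L+1))) = 0 := by
      have := B.sum_repr (WithLp.toLp 2 v₀ : EuclideanSpace ℝ (Fin (L+1)))
      rw [← this]
      simp [hrepr0]
    have h5 : v₀ (⟨0, Nat.succ_pos L⟩ : Fin (L+1)) = 0 := by
        simpa using congrArg (fun w : EuclideanSpace ℝ (Fin (L+1)) => w (⟨0, Nat.succ_pos L⟩ : Fin (L+1))) hzero
    exact absurd h5 (ne_of_gt (hv₀ _))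
  -- A > 0
  obtain ⟨k₀, hk₀⟩ := hex
  have hck₀ : c k₀ ≠ 0 := by
    intro hc0
    have := hprop k₀ hk₀
    rw [hc0, zero_div, zero_smul] at this
    exact hBne k₀ this
  have hApos : 0 < A := by
    rw [hA]
    have hterm : ∀ k ∈ Finset.univ, (0:ℝ) ≤ if lam k = μ then (c k)^2 / S else 0 := by
      intro k _
      split
      · positivity
      · exact le_refl 0
    calc (0:ℝ) < (c k₀)^2 / S := by positivity
    _ = if lam k₀ = μ then (c k₀)^2 / S else 0 := by rw [if_pos hk₀]
    _ ≤ ∑ k, (if lam k = μ then (c k)^2 / S else 0) :=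
        Finset.single_le_sum hterm (Finset.mem_univ k₀)
  -- conclude
  rw [hTA] at hT
  have hdn := div_nonneg hT hApos.le
  rw [mul_div_cancel_left₀ _ (ne_of_gt hApos)] at hdn
  linarith
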